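/- Let F be a Borel probability measure on ℝ^q, M ∈ L²(F) nonnegative, and X ∼ F. Suppose lim_{h↓0} E[(F(B_∞(X,h)))³]/(E[F(B_∞(X,h))])² = 0. Then E[M(X)·F(B_∞(X,h))] = o((E[F(B_∞(X,h))])^{3/4}) as h ↓ 0. -/

import Mathlib

open MeasureTheory Metric Set Filter Topology
open scoped ENNReal

theorem stmt15 (q : ℕ) (F : Measure (Fin q → ℝ)) [IsProbabilityMeasure F]
    (M : (Fin q → ℝ) → ℝ) (hM_nonneg : ∀ x, 0 ≤ M x)
    (hM_L2 : MemLp M 2 F)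
    (hratio : Tendsto (fun h : ℝ =>
        (∫ x, ((F (Metric.closedBall x h)).toReal) ^ 3 ∂F) /
          (∫ x, (F (Metric.closedBall x h)).toReal ∂F) ^ 2)
      (𝓝[>] (0 : ℝ)) (𝓝 0)) :
    Tendsto (fun h : ℝ =>
        (∫ x, M x * (F (Metric.closedBall x h)).toReal ∂F) /
          (∫ x, (F (Metric.closedBall x h)).toReal ∂F) ^ ((3 : ℝ) / 4))
      (𝓝[>] (0 : ℝ)) (𝓝 0) := by
  classical
  set A : ℝ := (∫ x, M x ^ 2 ∂F) ^ ((1:ℝ)/2) with hA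
  have hA_nonneg : 0 ≤ A := Real.rpow_nonneg (integral_nonneg fun x => sq_nonneg _) _
  have h22 : Real.HolderConjugate 2 2 := Real.HolderConjugate.two_two
  have h2eq : (ENNReal.ofReal (2:ℝ)) = (2 : ℝ≥0∞) := by
    simp [ENNReal.ofReal_ofNat]
  have key : ∀ h : ℝ,
      (∫ x, M x * (F (Metric.closedBall x h)).toReal ∂F) /
        (∫ x, (F (Metric.closedBall x h)).toReal ∂F) ^ ((3 : ℝ) / 4)
      ≤ A * ((∫ x, ((F (Metric.closedBall x h)).toReal) ^ 3 ∂F) /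
          (∫ x, (F (Metric.closedBall x h)).toReal ∂F) ^ 2) ^ ((1:ℝ)/4) := by
    intro h
    set g : (Fin q → ℝ) → ℝ := fun x => (F (Metric.closedBall x h)).toReal with hgdef
    have hg_meas : Measurable g := by
      have hs : MeasurableSet {p : (Fin q → ℝ) × (Fin q → ℝ) | dist p.2 p.1 ≤ h} :=
        measurableSet_le (by fun_prop) measurable_const
      have hmm := (measurable_measure_prodMk_left (ν := F) hs).ennreal_toReal
      convert hmm using 2 with x
      rfl
    have hg_nonneg : ∀ x, 0 ≤ g x := fun x => ENNReal.toReal_nonneg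
    have hg_le_one : ∀ x, g x ≤ 1 := by
      intro x
      have h1 : F (Metric.closedBall x h) ≤ 1 := prob_le_one
      simpa using ENNReal.toReal_mono (by norm_num) h1
    set G : ℝ := ∫ x, g x ∂F with hG
    set T : ℝ := ∫ x, g x ^ 3 ∂F with hT
    set N : ℝ := ∫ x, M x * g x ∂F with hN
    have hG_nonneg : 0 ≤ G := integral_nonneg fun x => hg_nonneg x
    have hT_nonneg : 0 ≤ T := integral_nonneg fun x => pow_nonneg (hg_nonneg x) 3
    have hN_nonneg : 0 ≤ N := integral_nonneg fun x => mul_nonneg (hM_nonneg x) (hg_nonneg x)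
    -- Memℒp facts for powers of g
    have hgLp : ∀ p : ℝ≥0∞, ∀ r : ℝ, 0 ≤ r → MemLp (fun x => g x ^ r) p F := by
      intro p r hr
      refine MemLp.of_bound ((by fun_prop : Measurable fun x => g x ^ r)).aestronglyMeasurable 1 ?_
      filter_upwards with x
      rw [Real.norm_of_nonneg (Real.rpow_nonneg (hg_nonneg x) r)]
      exact Real.rpow_le_one (hg_nonneg x) (hg_le_one x) hr
    have hgLp2 : MemLp g (ENNReal.ofReal 2) F := by
      refine MemLp.of_bound hg_meas.aestronglyMeasurable 1 ?_
      filter_upwards with x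
      rw [Real.norm_of_nonneg (hg_nonneg x)]; exact hg_le_one x
    -- Cauchy-Schwarz 1 : N ≤ A * (∫ g²)^(1/2)
    have cs1 : N ≤ A * (∫ x, g x ^ 2 ∂F) ^ ((1:ℝ)/2) := by
      have := integral_mul_le_Lp_mul_Lq_of_nonneg (μ := F) h22
        (f := M) (g := g)
        (Eventually.of_forall hM_nonneg) (Eventually.of_forall hg_nonneg)
        (by rw [h2eq]; exact hM_L2) hgLp2
      calc N ≤ (∫ a, M a ^ (2:ℝ) ∂F) ^ (1/(2:ℝ)) * (∫ a, g a ^ (2:ℝ) ∂F) ^ (1/(2:ℝ)) := this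
        _ = A * (∫ x, g x ^ 2 ∂F) ^ ((1:ℝ)/2) := by
            rw [hA]
            congr 2
            · exact integral_congr_ae (Eventually.of_forall fun x => Real.rpow_two _)
            · exact integral_congr_ae (Eventually.of_forall fun x => Real.rpow_two _)
    -- Cauchy-Schwarz 2 : ∫ g² ≤ T^(1/2) * G^(1/2)
    have cs2 : (∫ x, g x ^ 2 ∂F) ≤ T ^ ((1:ℝ)/2) * G ^ ((1:ℝ)/2) := by
      have hh := integral_mul_le_Lp_mul_Lq_of_nonneg (μ := F) h22
        (f := fun x => g x ^ ((3:ℝ)/2)) (g := fun x => g x ^ ((1:ℝ)/2))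
        (Eventually.of_forall fun x => Real.rpow_nonneg (hg_nonneg x) _)
        (Eventually.of_forall fun x => Real.rpow_nonneg (hg_nonneg x) _)
        (hgLp _ _ (by norm_num)) (hgLp _ _ (by norm_num))
      have e1 : (∫ a, g a ^ ((3:ℝ)/2) * g a ^ ((1:ℝ)/2) ∂F) = ∫ x, g x ^ 2 ∂F := by
        refine integral_congr_ae (Eventually.of_forall fun x => ?_)
        show g x ^ ((3:ℝ)/2) * g x ^ ((1:ℝ)/2) = g x ^ 2
        rw [← Real.rpow_add' (hg_nonneg x) (by norm_num), show (3:ℝ)/2 + 1/2 = (2:ℝ) by norm_num,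
          Real.rpow_two]
      have e2 : (∫ a, (g a ^ ((3:ℝ)/2)) ^ (2:ℝ) ∂F) = T := by
        rw [hT]
        refine integral_congr_ae (Eventually.of_forall fun x => ?_)
        show (g x ^ ((3:ℝ)/2)) ^ (2:ℝ) = g x ^ 3
        rw [← Real.rpow_mul (hg_nonneg x), show (3:ℝ)/2 * 2 = ((3:ℕ):ℝ) by norm_num,
          Real.rpow_natCast]
      have e3 : (∫ a, (g a ^ ((1:ℝ)/2)) ^ (2:ℝ) ∂F) = G := by
        rw [hG]
        refine integral_congr_ae (Eventually.of_forall fun x => ?_)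
        show (g x ^ ((1:ℝ)/2)) ^ (2:ℝ) = g x
        rw [← Real.rpow_mul (hg_nonneg x)]
        norm_num
      rw [e1, e2, e3] at hh
      exact hh
    -- combine: N ≤ A * T^(1/4) * G^(1/4)
    have hcomb : N ≤ A * (T ^ ((1:ℝ)/4) * G ^ ((1:ℝ)/4)) := by
      have h1 : (∫ x, g x ^ 2 ∂F) ^ ((1:ℝ)/2) ≤ (T ^ ((1:ℝ)/2) * G ^ ((1:ℝ)/2)) ^ ((1:ℝ)/2) :=
        Real.rpow_le_rpow (integral_nonneg fun x => sq_nonneg _) cs2 (by norm_num)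
      have h2 : (T ^ ((1:ℝ)/2) * G ^ ((1:ℝ)/2)) ^ ((1:ℝ)/2)
          = T ^ ((1:ℝ)/4) * G ^ ((1:ℝ)/4) := by
        rw [Real.mul_rpow (Real.rpow_nonneg hT_nonneg _) (Real.rpow_nonneg hG_nonneg _),
          ← Real.rpow_mul hT_nonneg, ← Real.rpow_mul hG_nonneg]
        norm_num
      calc N ≤ A * (∫ x, g x ^ 2 ∂F) ^ ((1:ℝ)/2) := cs1
        _ ≤ A * (T ^ ((1:ℝ)/2) * G ^ ((1:ℝ)/2)) ^ ((1:ℝ)/2) := by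
            exact mul_le_mul_of_nonneg_left h1 hA_nonneg
        _ = A * (T ^ ((1:ℝ)/4) * G ^ ((1:ℝ)/4)) := by rw [h2]
    -- final algebra
    show N / G ^ ((3:ℝ)/4) ≤ A * (T / G ^ 2) ^ ((1:ℝ)/4)
    rcases eq_or_lt_of_le hG_nonneg with hG0 | hGpos
    · rw [← hG0, Real.zero_rpow (by norm_num), div_zero]
      positivity
    · rw [div_le_iff₀ (Real.rpow_pos_of_pos hGpos _)]
      have e4 : (T / G ^ 2) ^ ((1:ℝ)/4) = T ^ ((1:ℝ)/4) / G ^ ((1:ℝ)/2) := by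
        rw [Real.div_rpow hT_nonneg (sq_nonneg G)]
        congr 1
        rw [← Real.rpow_natCast G 2, ← Real.rpow_mul hG_nonneg]
        norm_num
      rw [e4]
      have e5 : A * (T ^ ((1:ℝ)/4) / G ^ ((1:ℝ)/2)) * G ^ ((3:ℝ)/4)
          = A * (T ^ ((1:ℝ)/4) * G ^ ((1:ℝ)/4)) := by
        have hsplit : G ^ ((3:ℝ)/4) = G ^ ((1:ℝ)/2) * G ^ ((1:ℝ)/4) := by
          rw [← Real.rpow_add hGpos]; norm_num
        have hne : G ^ ((1:ℝ)/2) ≠ 0 := (Real.rpow_pos_of_pos hGpos _).ne'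
        rw [hsplit]
        field_simp
      rw [e5]
      exact hcomb
  -- squeeze
  have hlow : ∀ h : ℝ, 0 ≤ (∫ x, M x * (F (Metric.closedBall x h)).toReal ∂F) /
      (∫ x, (F (Metric.closedBall x h)).toReal ∂F) ^ ((3 : ℝ) / 4) := by
    intro h
    apply div_nonneg
    · exact integral_nonneg fun x => mul_nonneg (hM_nonneg x) ENNReal.toReal_nonneg
    · exact Real.rpow_nonneg (integral_nonneg fun x => ENNReal.toReal_nonneg) _
  have hbnd : Tendsto (fun h : ℝ => A * ((∫ x, ((F (Metric.closedBall x h)).toReal) ^ 3 ∂F) /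
      (∫ x, (F (Metric.closedBall x h)).toReal ∂F) ^ 2) ^ ((1:ℝ)/4)) (𝓝[>] (0:ℝ)) (𝓝 0) := by
    have := (hratio.rpow_const (p := (1:ℝ)/4) (Or.inr (by norm_num))).const_mul A
    simpa [Real.zero_rpow (show ((1:ℝ)/4) ≠ 0 by norm_num)] using this
  exact squeeze_zero hlow key hbnd
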